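/- arXiv:2304.11544 — 4 statements merged into one kernel-verified Lean document; each statement's English description precedes it below -/
import Mathlib

section
/- Let (A_j)_{j ∈ J} be a family of topological abelian groups, P = ∏_{j ∈ J} A_j with the Tychonov topology and canonical embeddings τ_j : A_j → P, and let H be a Hausdorff topological abelian group. If ω, ω' : P → H are continuous group homomorphisms satisfying ω ∘ τ_j = ω' ∘ τ_j for every j ∈ J, then ω = ω'. -/
/-- Two continuous homomorphisms from a Cartesian product of topological abelian
groups (with the Tychonov topology) into a Hausdorff topological abelian group
that agree on each canonical embedding `τ_j : A_j → ∏_k A_k` are equal. -/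
theorem eq_of_comp_mulSingle_eq {J : Type*} [DecidableEq J] (A : J → Type*)
    [∀ j, CommGroup (A j)] [∀ j, TopologicalSpace (A j)] [∀ j, IsTopologicalGroup (A j)]
    {H : Type*} [CommGroup H] [TopologicalSpace H] [IsTopologicalGroup H] [T2Space H]
    (ω ω' : (∀ j, A j) →* H) (hω : Continuous ω) (hω' : Continuous ω')
    (h : ∀ (j : J) (a : A j), ω (Pi.mulSingle j a) = ω' (Pi.mulSingle j a)) :
    ω = ω' := by
  classical
  set K : Subgroup (∀ j, A j) := Subgroup.closure (⋃ j, Set.range (Pi.mulSingle j)) with hK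
  have hdense : Dense (K : Set (∀ j, A j)) := by
    intro x
    rw [mem_closure_iff_nhds, nhds_pi]
    intro s hs
    obtain ⟨I, hIfin, t, ht, hsub⟩ := Filter.mem_pi.mp hs
    refine ⟨fun j => if j ∈ I then x j else 1, hsub ?_, ?_⟩
    · intro j hj
      simp only [if_pos hj]
      exact mem_of_mem_nhds (ht j)
    · have : (fun j => if j ∈ I then x j else 1) =
          ∏ j ∈ hIfin.toFinset, Pi.mulSingle j (x j) := by
        funext k
        rw [Finset.prod_apply]
        by_cases hk : k ∈ I
        · rw [if_pos hk,
            Finset.prod_eq_single k (fun j _ hj => Pi.mulSingle_eq_of_ne (Ne.symm hj) _)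
              (fun hnk => absurd (hIfin.mem_toFinset.mpr hk) hnk),
            Pi.mulSingle_eq_same]
        · rw [if_neg hk]
          refine (Finset.prod_eq_one fun j hj => ?_).symm
          have : k ≠ j := fun e => hk (e ▸ hIfin.mem_toFinset.mp hj)
          exact Pi.mulSingle_eq_of_ne this _
      rw [this]
      exact Subgroup.prod_mem K fun j _ =>
        Subgroup.subset_closure (Set.mem_iUnion.mpr ⟨j, Set.mem_range_self _⟩)
  have hle : K ≤ ω.eqLocus ω' := by
    rw [hK, Subgroup.closure_le]
    rintro _ ⟨_, ⟨j, rfl⟩, a, rfl⟩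
    exact h j a
  have : ⇑ω = ⇑ω' := Continuous.ext_on hdense hω hω' fun x hx => hle hx
  exact MonoidHom.ext fun x => congrFun this x
end

section
/- Let (A_j)_{j ∈ J} be a family of topological abelian groups, P = ∏_{j ∈ J} A_j with the Tychonov topology and canonical embeddings τ_j : A_j → P. Let H be a Hausdorff topological abelian group having no small subgroups (e.g., an abelian Lie group), and let (ψ_j)_{j ∈ J} be a convergent family of continuous homomorphisms ψ_j : A_j → H. Then there exists a unique continuous group homomorphism ω : P → H such that ψ_j = ω ∘ τ_j for all j ∈ J. -/
/-- Universal property of the product as conditional coproduct, for a target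
which is Hausdorff abelian with no small subgroups: every convergent family of
continuous homomorphisms `ψ_j : A_j → H` factors uniquely through the Cartesian
product `∏_j A_j` via the canonical embeddings. -/
theorem exists_unique_factor_of_nss {J : Type*} [DecidableEq J] (A : J → Type*)
    [∀ j, CommGroup (A j)] [∀ j, TopologicalSpace (A j)] [∀ j, IsTopologicalGroup (A j)]
    {H : Type*} [CommGroup H] [TopologicalSpace H] [IsTopologicalGroup H] [T2Space H]
    (hnss : ∃ V ∈ nhds (1 : H), ∀ K : Subgroup H, (K : Set H) ⊆ V → K = ⊥)
    (ψ : ∀ j, A j →* H) (hcont : ∀ j, Continuous (ψ j))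
    (hconv : ∀ U ∈ nhds (1 : H), {j : J | ¬ ∀ a : A j, ψ j a ∈ U}.Finite) :
    ∃! ω : ContinuousMonoidHom (∀ j, A j) H,
      ∀ (j : J) (a : A j), ω (Pi.mulSingle j a) = ψ j a := by
  obtain ⟨V, hV, hVsub⟩ := hnss
  have hfin := hconv V hV
  set S : Finset J := hfin.toFinset with hS
  -- ψ j is trivial off S
  have htriv : ∀ j ∉ S, ∀ a : A j, ψ j a = 1 := by
    intro j hj a
    have hj' : ∀ a : A j, ψ j a ∈ V := by
      by_contra h
      exact hj (hfin.mem_toFinset.mpr (by simpa using h))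
    have hrange : ((ψ j).range : Set H) ⊆ V := by
      rintro x ⟨a, rfl⟩; exact hj' a
    have := hVsub _ hrange
    have : ψ j a ∈ ((⊥ : Subgroup H) : Set H) := this ▸ ⟨a, rfl⟩
    simpa using this
  -- the candidate homomorphism
  set f : (∀ j, A j) →* H :=
    { toFun := fun x => ∏ j ∈ S, ψ j (x j)
      map_one' := by simp
      map_mul' := fun x y => by simp [Finset.prod_mul_distrib] } with hf
  have hfc : Continuous f := by
    apply continuous_finset_prod
    intro j _
    exact (hcont j).comp (continuous_apply j)
  set ω : ContinuousMonoidHom (∀ j, A j) H := ⟨f, hfc⟩ with hω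
  have hfactor : ∀ (j : J) (a : A j), ω (Pi.mulSingle j a) = ψ j a := by
    intro j a
    show ∏ k ∈ S, ψ k (Pi.mulSingle j a k) = ψ j a
    by_cases hj : j ∈ S
    · rw [Finset.prod_eq_single j]
      · simp
      · intro k _ hk
        rw [Pi.mulSingle_eq_of_ne hk, map_one]
      · intro h; exact absurd hj h
    · rw [htriv j hj a, Finset.prod_eq_one]
      intro k hk
      have hkj : k ≠ j := fun h => hj (h ▸ hk)
      rw [Pi.mulSingle_eq_of_ne hkj, map_one]
  refine ⟨ω, hfactor, ?_⟩
  intro ω' hω'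
  -- uniqueness: ω' and ω agree on the dense set of finitely supported elements
  have key : ∀ (χ : ContinuousMonoidHom (∀ j, A j) H),
      (∀ (j : J) (a : A j), χ (Pi.mulSingle j a) = ψ j a) →
      ∀ (F : Finset J) (x : ∀ j, A j), (∀ j ∉ F, x j = 1) →
        χ x = ∏ j ∈ F, ψ j (x j) := by
    intro χ hχ F x hx
    have hxeq : x = ∏ j ∈ F, Pi.mulSingle j (x j) := by
      funext k
      rw [Finset.prod_apply]
      by_cases hk : k ∈ F
      · rw [Finset.prod_eq_single k]
        · simp
        · intro j _ hj; exact Pi.mulSingle_eq_of_ne (Ne.symm hj) _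
        · intro h; exact absurd hk h
      · rw [hx k hk, Finset.prod_eq_one]
        intro j hj
        have : j ≠ k := fun h => hk (h ▸ hj)
        exact Pi.mulSingle_eq_of_ne (Ne.symm this) _
    conv_lhs => rw [hxeq]
    rw [map_prod]
    exact Finset.prod_congr rfl fun j _ => hχ j (x j)
  -- dense set
  set D : Set (∀ j, A j) := {x | ∃ F : Finset J, ∀ j ∉ F, x j = 1} with hD
  have hdense : Dense D := by
    intro x
    rw [mem_closure_iff]
    intro U hU hxU
    obtain ⟨I, u, hu, hsub⟩ := isOpen_pi_iff.mp hU x hxU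
    refine ⟨fun j => if j ∈ I then x j else 1, ?_, ⟨I, fun j hj => by simp [hj]⟩⟩
    apply hsub
    intro j hj
    simp only [Finset.mem_coe.mp hj, if_pos]
    exact (hu j hj).2
  have heqon : Set.EqOn (⇑ω') (⇑ω) D := by
    rintro x ⟨F, hF⟩
    rw [key ω' hω' F x hF, key ω hfactor F x hF]
  have : ⇑ω' = ⇑ω := Continuous.ext_on hdense ω'.continuous ω.continuous heqon
  ext x
  rw [this]
end

section
/- Let (A_j)_{j ∈ J} be a family of topological abelian groups, P = ∏_{j ∈ J} A_j with the Tychonov topology and canonical embeddings τ_j : A_j → P. Let H be a profinite abelian group, i.e., a compact Hausdorff totally disconnected topological abelian group, and let (ψ_j)_{j ∈ J} be a convergent family of continuous homomorphisms ψ_j : A_j → H. Then there exists a unique continuous group homomorphism ω : P → H such that ψ_j = ω ∘ τ_j for all j ∈ J. -/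
/-- Universal property of the product as conditional coproduct, for a profinite
abelian target: if `H` is a compact Hausdorff totally disconnected topological
abelian group, every convergent family of continuous homomorphisms
`ψ_j : A_j → H` factors uniquely through the Cartesian product `∏_j A_j`
via the canonical embeddings. -/
theorem exists_unique_factor_profinite {J : Type*} [DecidableEq J] (A : J → Type*)
    [∀ j, CommGroup (A j)] [∀ j, TopologicalSpace (A j)] [∀ j, IsTopologicalGroup (A j)]
    {H : Type*} [CommGroup H] [TopologicalSpace H] [IsTopologicalGroup H]
    [CompactSpace H] [T2Space H] [TotallyDisconnectedSpace H]
    (ψ : ∀ j, A j →* H) (hcont : ∀ j, Continuous (ψ j))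
    (hconv : ∀ U ∈ nhds (1 : H), {j : J | ¬ ∀ a : A j, ψ j a ∈ U}.Finite) :
    ∃! ω : ContinuousMonoidHom (∀ j, A j) H,
      ∀ (j : J) (a : A j), ω (Pi.mulSingle j a) = ψ j a := by
  classical
  -- open subgroups form a neighborhood basis of 1 in H
  have hbasis : ∀ U ∈ nhds (1 : H), ∃ V : OpenSubgroup H, (V : Set H) ⊆ U := by
    intro U hU
    obtain ⟨O, hOU, hO, h1O⟩ := mem_nhds_iff.mp hU
    obtain ⟨W, hWclopen, h1W, hWO⟩ := compact_exists_isClopen_in_isOpen hO h1O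
    obtain ⟨V, hV⟩ := IsTopologicalGroup.exist_openSubgroup_sub_clopen_nhds_of_one hWclopen h1W
    exact ⟨V, hV.trans (hWO.trans hOU)⟩
  letI : UniformSpace H := IsTopologicalGroup.rightUniformSpace H
  haveI : IsUniformGroup H := isUniformGroup_of_commGroup
  haveI : CompleteSpace H := complete_of_compact
  -- multipliability of the families of values
  have hmul : ∀ x : ∀ j, A j, Multipliable fun j => ψ j (x j) := by
    intro x
    rw [multipliable_iff_vanishing]
    intro e he
    obtain ⟨V, hV⟩ := hbasis e he
    refine ⟨(hconv V (V.mem_nhds_one)).toFinset, fun t ht => hV ?_⟩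
    refine Subgroup.prod_mem V.toSubgroup fun j hj => ?_
    by_contra hbad
    have : j ∈ (hconv V V.mem_nhds_one).toFinset := by
      simp only [Set.Finite.mem_toFinset, Set.mem_setOf_eq]
      intro h; exact hbad (h (x j))
    exact (Finset.disjoint_left.mp ht hj) this
  -- the candidate map
  set ω₀ : (∀ j, A j) →* H :=
    { toFun := fun x => ∏' j, ψ j (x j)
      map_one' := by simp only [Pi.one_apply, map_one, tprod_one]
      map_mul' := by
        intro x y
        simp only [Pi.mul_apply, map_mul]
        exact Multipliable.tprod_mul (hmul x) (hmul y) } with hω₀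
  -- continuity
  have hcontω : Continuous ω₀ := by
    apply continuous_of_continuousAt_one ω₀
    rw [ContinuousAt, map_one]
    intro U hU
    rw [Filter.mem_map]
    obtain ⟨V, hV⟩ := hbasis U hU
    set F := (hconv V V.mem_nhds_one).toFinset with hF
    have hWopen : IsOpen {x : ∀ j, A j | ∀ j ∈ F, ψ j (x j) ∈ V} := by
      have : {x : ∀ j, A j | ∀ j ∈ F, ψ j (x j) ∈ V}
          = ⋂ j ∈ F, (fun x : ∀ j, A j => ψ j (x j)) ⁻¹' (V : Set H) := by
        ext x; simp
      rw [this]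
      exact isOpen_biInter_finset fun j _ =>
        V.isOpen.preimage ((hcont j).comp (continuous_apply j))
    have hWmem : {x : ∀ j, A j | ∀ j ∈ F, ψ j (x j) ∈ V} ∈ nhds (1 : ∀ j, A j) := by
      refine hWopen.mem_nhds fun j _ => by
        simp only [Pi.one_apply, map_one]
        exact V.one_mem
    refine Filter.mem_of_superset hWmem ?_
    intro x hx
    have hall : ∀ j, ψ j (x j) ∈ V := by
      intro j
      by_cases hj : j ∈ F
      · exact hx j hj
      · simp only [hF, Set.Finite.mem_toFinset, Set.mem_setOf_eq, not_not] at hj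
        exact hj (x j)
    have : ω₀ x ∈ V := by
      have hprod := (hmul x).hasProd
      exact V.isClosed.mem_of_tendsto hprod
        (Filter.Eventually.of_forall fun s => Subgroup.prod_mem _ fun j _ => hall j)
    exact hV this
  refine ⟨⟨ω₀, hcontω⟩, ?_, ?_⟩
  · intro j a
    show ω₀ (Pi.mulSingle j a) = ψ j a
    have h1 : ∀ k ≠ j, ψ k (Pi.mulSingle j a k) = 1 := by
      intro k hk
      rw [Pi.mulSingle_eq_of_ne hk, map_one]
    calc (∏' k, ψ k (Pi.mulSingle j a k)) = ψ j (Pi.mulSingle j a j) :=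
          tprod_eq_mulSingle j h1
      _ = ψ j a := by rw [Pi.mulSingle_eq_same]
  · -- uniqueness
    intro ω' hω'
    have hdense : Dense (Subgroup.closure (⋃ j, Set.range (Pi.mulSingle j :
        A j → ∀ k, A k)) : Set (∀ j, A j)) := by
      intro x
      rw [mem_closure_iff]
      intro o ho hxo
      obtain ⟨I, u, hu, hsub⟩ := isOpen_pi_iff.mp ho x hxo
      refine ⟨fun j => if j ∈ I then x j else 1, ?_, ?_⟩
      · apply hsub
        intro j hj
        simp only [Finset.mem_coe] at hj
        simp only [if_pos hj]
        exact (hu j hj).2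
      · have : (fun j => if j ∈ I then x j else 1)
            = ∏ j ∈ I, Pi.mulSingle j (x j) := by
          funext k
          rw [Finset.prod_apply]
          by_cases hk : k ∈ I
          · rw [if_pos hk, Finset.prod_eq_single k
              (fun b _ hb => Pi.mulSingle_eq_of_ne (Ne.symm hb) _)
              (fun h => absurd hk h)]
            rw [Pi.mulSingle_eq_same]
          · rw [if_neg hk]
            symm
            refine Finset.prod_eq_one fun b hb => Pi.mulSingle_eq_of_ne ?_ _
            rintro rfl
            exact hk hb
        rw [this]
        exact Subgroup.prod_mem _ fun j _ => Subgroup.subset_closure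
          (Set.mem_iUnion.mpr ⟨j, Set.mem_range_self _⟩)
    have heq : (ω' : (∀ j, A j) → H) = (ω₀ : (∀ j, A j) → H) := by
      refine Continuous.ext_on hdense ω'.continuous hcontω ?_
      have hS : Set.EqOn (ω' : (∀ j, A j) →* H) ω₀
          (⋃ j, Set.range (Pi.mulSingle j : A j → ∀ k, A k)) := by
        rintro y hy
        obtain ⟨_, ⟨j, rfl⟩, a, rfl⟩ := hy
        calc ω' (Pi.mulSingle j a) = ψ j a := hω' j a
          _ = ω₀ (Pi.mulSingle j a) := by
              rw [hω₀]
              show ψ j a = ∏' k, ψ k (Pi.mulSingle j a k)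
              rw [tprod_eq_mulSingle j (fun k hk => by
                rw [Pi.mulSingle_eq_of_ne hk, map_one]), Pi.mulSingle_eq_same]
      exact MonoidHom.eqOn_closure hS
    ext x
    exact congrFun heq x
end

section
/- Let (A_j)_{j ∈ J} be a family of topological abelian groups, P = ∏_{j ∈ J} A_j with the Tychonov topology and canonical embeddings τ_j : A_j → P. Let H be a complete Hausdorff topological abelian group whose identity has a neighborhood basis consisting of open subgroups (a complete nonarchimedean abelian group), and let (ψ_j)_{j ∈ J} be a convergent family of continuous homomorphisms ψ_j : A_j → H. Then there exists a unique continuous group homomorphism ω : P → H such that ψ_j = ω ∘ τ_j for all j ∈ J. -/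
section Aux

variable {J : Type*} [DecidableEq J] {A : J → Type*}
    [∀ j, CommGroup (A j)] [∀ j, TopologicalSpace (A j)] [∀ j, IsTopologicalGroup (A j)]
    {H : Type*} [CommGroup H] [UniformSpace H] [IsUniformGroup H]
    [CompleteSpace H] [T2Space H] [NonarchimedeanGroup H]

private theorem tprod_mem_openSubgroup (V : OpenSubgroup H) (f : J → H)
    (hf : ∀ j, f j ∈ V) : ∏' j, f j ∈ V := by
  by_cases h : Multipliable f
  · exact V.isClosed.mem_of_tendsto h.hasProd
      (Filter.Eventually.of_forall fun s => V.toSubgroup.prod_mem fun j _ => hf j)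
  · rw [tprod_eq_one_of_not_multipliable h]; exact V.one_mem

private theorem aux_multipliable (ψ : ∀ j, A j →* H)
    (hconv : ∀ U ∈ nhds (1 : H), {j : J | ¬ ∀ a : A j, ψ j a ∈ U}.Finite)
    (x : ∀ j, A j) : Multipliable fun j => ψ j (x j) := by
  rw [multipliable_iff_vanishing]
  intro e he
  obtain ⟨V, hV⟩ := NonarchimedeanGroup.is_nonarchimedean e he
  refine ⟨(hconv V V.mem_nhds_one).toFinset, fun t ht => hV ?_⟩
  refine V.toSubgroup.prod_mem fun j hj => ?_
  have hjn : j ∉ {j : J | ¬ ∀ a : A j, ψ j a ∈ (V : Set H)} := by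
    intro hmem
    exact Finset.disjoint_left.1 ht hj ((hconv V V.mem_nhds_one).mem_toFinset.2 hmem)
  simpa using not_not.1 (fun h => hjn h) (x j)

end Aux

/-- Universal property of the product as conditional coproduct, for a complete
Hausdorff nonarchimedean abelian target: every convergent family of continuous
homomorphisms `ψ_j : A_j → H` factors uniquely through the Cartesian product
`∏_j A_j` via the canonical embeddings. -/
theorem exists_unique_factor_nonarchimedean {J : Type*} [DecidableEq J] (A : J → Type*)
    [∀ j, CommGroup (A j)] [∀ j, TopologicalSpace (A j)] [∀ j, IsTopologicalGroup (A j)]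
    {H : Type*} [CommGroup H] [UniformSpace H] [IsUniformGroup H]
    [CompleteSpace H] [T2Space H] [NonarchimedeanGroup H]
    (ψ : ∀ j, A j →* H) (hcont : ∀ j, Continuous (ψ j))
    (hconv : ∀ U ∈ nhds (1 : H), {j : J | ¬ ∀ a : A j, ψ j a ∈ U}.Finite) :
    ∃! ω : ContinuousMonoidHom (∀ j, A j) H,
      ∀ (j : J) (a : A j), ω (Pi.mulSingle j a) = ψ j a := by
  classical
  have hmul : ∀ x : ∀ j, A j, Multipliable fun j => ψ j (x j) :=
    aux_multipliable ψ hconv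
  -- the underlying monoid hom
  set F : (∀ j, A j) →* H :=
    { toFun := fun x => ∏' j, ψ j (x j)
      map_one' := by simp
      map_mul' := fun x y => by
        have := Multipliable.tprod_mul (hmul x) (hmul y)
        simpa [map_mul] using this } with hF
  have hFdef : ∀ x, F x = ∏' j, ψ j (x j) := fun x => rfl
  -- continuity
  have hcF : Continuous F := by
    apply continuous_of_continuousAt_one F
    rw [ContinuousAt, map_one, Filter.tendsto_def]
    intro U hU
    obtain ⟨V, hV⟩ := NonarchimedeanGroup.is_nonarchimedean U hU
    set s := (hconv V V.mem_nhds_one).toFinset with hs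
    have hmem : {x : ∀ j, A j | ∀ j ∈ s, ψ j (x j) ∈ V} ∈ nhds (1 : ∀ j, A j) := by
      have : {x : ∀ j, A j | ∀ j ∈ s, ψ j (x j) ∈ V}
          = ⋂ j ∈ s, {x : ∀ j, A j | ψ j (x j) ∈ V} := by
        ext x; simp
      rw [this, Filter.biInter_finset_mem]
      intro j _
      have hc : Continuous fun x : ∀ j, A j => ψ j (x j) :=
        (hcont j).comp (continuous_apply j)
      have : (fun x : ∀ j, A j => ψ j (x j)) ⁻¹' V ∈ nhds (1 : ∀ j, A j) := by
        apply hc.continuousAt.preimage_mem_nhds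
        simpa using V.mem_nhds_one
      exact this
    refine Filter.mem_of_superset hmem fun x hx => ?_
    refine hV ?_
    refine tprod_mem_openSubgroup V _ fun j => ?_
    by_cases hj : j ∈ s
    · exact hx j hj
    · have : j ∉ {j : J | ¬ ∀ a : A j, ψ j a ∈ (V : Set H)} := by
        intro hmem'
        exact hj ((hconv V V.mem_nhds_one).mem_toFinset.2 hmem')
      simpa using not_not.1 (fun h => this h) (x j)
  refine ⟨⟨F, hcF⟩, ?_, ?_⟩
  · intro j a
    show F (Pi.mulSingle j a) = ψ j a
    rw [hFdef]
    rw [tprod_eq_mulSingle j]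
    · rw [Pi.mulSingle_eq_same]
    · intro k hk
      rw [Pi.mulSingle_eq_of_ne hk, map_one]
  · intro ω' hω'
    ext x
    show ω' x = F x
    -- partial truncations converge to x
    have htend : Filter.Tendsto
        (fun t : Finset J => ∏ j ∈ t, Pi.mulSingle j (x j)) Filter.atTop (nhds x) := by
      rw [tendsto_pi_nhds]
      intro k
      have hev : ∀ᶠ t : Finset J in Filter.atTop,
          (∏ j ∈ t, Pi.mulSingle j (x j)) k = x k := by
        rw [Filter.eventually_atTop]
        refine ⟨{k}, fun t ht => ?_⟩
        have hk : k ∈ t := ht (Finset.mem_singleton_self k)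
        rw [Finset.prod_apply]
        rw [Finset.prod_eq_single k (fun b _ hb => Pi.mulSingle_eq_of_ne (Ne.symm hb) _)
          (fun h => absurd hk h)]
        exact Pi.mulSingle_eq_same k (x k)
      exact Filter.Tendsto.congr' (hev.mono fun t h => h.symm) tendsto_const_nhds
    have h1 : Filter.Tendsto (fun t : Finset J => ω' (∏ j ∈ t, Pi.mulSingle j (x j)))
        Filter.atTop (nhds (ω' x)) := (ω'.continuous.tendsto x).comp htend
    have heq : ∀ t : Finset J,
        ω' (∏ j ∈ t, Pi.mulSingle j (x j)) = ∏ j ∈ t, ψ j (x j) := by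
      intro t
      rw [map_prod]
      exact Finset.prod_congr rfl fun j _ => hω' j (x j)
    have h2 : Filter.Tendsto (fun t : Finset J => ∏ j ∈ t, ψ j (x j))
        Filter.atTop (nhds (ω' x)) := h1.congr fun t => heq t
    exact tendsto_nhds_unique h2 (hmul x).hasProd
end
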